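/- Let (x^int, y^int) be the unique common intersection point of the m hyperplanes y = f_k(x, S_k) associated with a Markov chain S with stationary distribution π. Then for every x ∈ ℝ^{m−1}, y^int = Σ_{k=0}^{m−1} f_k(x, S_k)·π_k = cost(S), where cost(S) = Σ_k ℓ(S_k)·π_k. -/

import Mathlib

lemma stmt5_cancel {m : ℕ} (q : Fin m → Fin m → ℝ) (pii : Fin m → ℝ)
    (hstat : Matrix.vecMul pii (Matrix.of q) = pii) (x : Fin m → ℝ) :
    ∑ k, (∑ j, q k j * x j) * pii k = ∑ k, x k * pii k := by
  have h : ∀ j, ∑ k, pii k * q k j = pii j := by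
    intro j
    have := congrFun hstat j
    simpa [Matrix.vecMul, dotProduct, Matrix.of_apply] using this
  calc ∑ k, (∑ j, q k j * x j) * pii k
      = ∑ j, (∑ k, pii k * q k j) * x j := by
        simp only [Finset.sum_mul]
        rw [Finset.sum_comm]
        exact Finset.sum_congr rfl fun j _ => Finset.sum_congr rfl fun k _ => by ring
    _ = ∑ k, x k * pii k := by
        simp only [h]
        simp [mul_comm]

/-- If `(xint, yint)` is the common intersection point of the `m` hyperplanes
`y = f_k(x,S_k)` of a Markov chain with stationary distribution `pii`, then for
every `x` (with `x 0 = 0`), `yint = ∑ k, f_k(x,S_k) * pii k = cost(S)` where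
`cost(S) = ∑ k, ℓ k * pii k`. -/
theorem stmt5 (m : ℕ) (hm : 0 < m) (q : Fin m → Fin m → ℝ) (ℓ : Fin m → ℝ)
    (hqnn : ∀ k j, 0 ≤ q k j) (hqsum : ∀ k, ∑ j, q k j = 1)
    (pii : Fin m → ℝ) (hpnn : ∀ k, 0 ≤ pii k) (hpsum : ∑ k, pii k = 1)
    (hstat : Matrix.vecMul pii (Matrix.of q) = pii)
    (xint : Fin m → ℝ) (yint : ℝ) (hx0 : xint ⟨0, hm⟩ = 0)
    (hint : ∀ k, ℓ k + (∑ j, q k j * xint j) - xint k = yint) :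
    ∀ x : Fin m → ℝ, x ⟨0, hm⟩ = 0 →
      yint = ∑ k, (ℓ k + (∑ j, q k j * x j) - x k) * pii k ∧
      yint = ∑ k, ℓ k * pii k := by
  have key : ∀ z : Fin m → ℝ,
      ∑ k, (ℓ k + (∑ j, q k j * z j) - z k) * pii k = ∑ k, ℓ k * pii k := by
    intro z
    have hc := stmt5_cancel q pii hstat z
    simp only [sub_mul, add_mul]
    rw [Finset.sum_sub_distrib, Finset.sum_add_distrib, hc]
    ring
  have hy : yint = ∑ k, ℓ k * pii k := by
    have : ∑ k, (ℓ k + (∑ j, q k j * xint j) - xint k) * pii k = yint := by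
      calc ∑ k, (ℓ k + (∑ j, q k j * xint j) - xint k) * pii k
          = ∑ k, yint * pii k := by
            apply Finset.sum_congr rfl; intro k _; rw [hint k]
        _ = yint := by rw [← Finset.mul_sum, hpsum, mul_one]
    rw [← this, key]
  intro x hx
  exact ⟨by rw [key x, ← hy], hy⟩
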